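/- For real numbers λ₁ ≥ ⋯ ≥ λ_{2n} ≥ 0 (n ≥ 2), the following are equivalent: (i) for all a ∈ [1/2, 1], −√(a(1−a))·λ₁ + (1−a)·λ_{2n−2} + √(a(1−a))·λ_{2n−1} + a·λ_{2n} ≥ 0; (ii) λ₁ ≤ λ_{2n−1} + 2√(λ_{2n−2}·λ_{2n}). -/

import Mathlib

set_option maxHeartbeats 1000000 in
theorem stmt12 (n : ℕ) (hn : 2 ≤ n) (lam : Fin (2 * n) → ℝ)
    (hsort : ∀ i j : Fin (2 * n), i ≤ j → lam j ≤ lam i)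
    (hnonneg : ∀ i, 0 ≤ lam i) :
    (∀ a : ℝ, a ∈ Set.Icc (1/2 : ℝ) 1 →
      0 ≤ -Real.sqrt (a * (1 - a)) * lam ⟨0, by omega⟩
        + (1 - a) * lam ⟨2 * n - 3, by omega⟩
        + Real.sqrt (a * (1 - a)) * lam ⟨2 * n - 2, by omega⟩
        + a * lam ⟨2 * n - 1, by omega⟩)
    ↔ lam ⟨0, by omega⟩ ≤ lam ⟨2 * n - 2, by omega⟩
        + 2 * Real.sqrt (lam ⟨2 * n - 3, by omega⟩ * lam ⟨2 * n - 1, by omega⟩) := by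
  set L := lam ⟨0, by omega⟩ with hLdef
  set b := lam ⟨2 * n - 3, by omega⟩ with hbdef
  set c := lam ⟨2 * n - 2, by omega⟩ with hcdef
  set d := lam ⟨2 * n - 1, by omega⟩ with hddef
  have hb0 : 0 ≤ b := hnonneg _
  have hd0 : 0 ≤ d := hnonneg _
  have hdb : d ≤ b := hsort ⟨2 * n - 3, by omega⟩ ⟨2 * n - 1, by omega⟩
    (by simp only [Fin.mk_le_mk]; omega)
  clear_value L b c d
  constructor
  · intro h
    by_cases hd : d = 0
    · -- need L ≤ c
      rw [hd, mul_zero, Real.sqrt_zero]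
      by_contra hcon
      push_neg at hcon
      set t : ℝ := L - c with htdef
      clear_value t
      have ht : 0 < t := by simp only [htdef]; linarith
      have hs : (0:ℝ) < b ^ 2 + t ^ 2 := by positivity
      set a : ℝ := (b ^ 2 + t ^ 2 / 2) / (b ^ 2 + t ^ 2) with hadef
      clear_value a
      have ha1 : 1 / 2 ≤ a := by
        rw [hadef, le_div_iff₀ hs]; nlinarith
      have ha2 : a ≤ 1 := by
        rw [hadef, div_le_one hs]; nlinarith
      have h1a : 1 - a = (t ^ 2 / 2) / (b ^ 2 + t ^ 2) := by
        rw [hadef]; field_simp; ring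
      have hkey' : a * t ^ 2 - (1 - a) * b ^ 2
          = (t ^ 2 * (b ^ 2 + t ^ 2 / 2) - t ^ 2 / 2 * b ^ 2) / (b ^ 2 + t ^ 2) := by
        rw [h1a, hadef]; field_simp
      have hnum : 0 < (t ^ 2 * (b ^ 2 + t ^ 2 / 2) - t ^ 2 / 2 * b ^ 2) / (b ^ 2 + t ^ 2) :=
        div_pos (by nlinarith [mul_pos ht ht, sq_nonneg (t * b), mul_pos (mul_pos ht ht) (mul_pos ht ht)]) hs
      have key : (1 - a) * b ^ 2 < a * t ^ 2 := by linarith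
      have hcall := h a ⟨ha1, ha2⟩
      rw [hd, mul_zero, add_zero] at hcall
      set r : ℝ := Real.sqrt (a * (1 - a)) with hrdef
      have hr0 : 0 ≤ r := Real.sqrt_nonneg _
      have hrsq : r ^ 2 = a * (1 - a) := by
        rw [hrdef, Real.sq_sqrt]
        nlinarith
      -- from hcall : 0 ≤ -r * L + (1-a) * b + r * c, i.e. r * t ≤ (1-a) * b
      have h2 : r * t ≤ (1 - a) * b := by simp only [htdef]; nlinarith
      have h3 : r ^ 2 * t ^ 2 ≤ ((1 - a) * b) ^ 2 := by
        nlinarith [mul_nonneg hr0 ht.le]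
      rw [hrsq] at h3
      have h1apos : 0 < 1 - a := by
        rw [h1a]; positivity
      nlinarith
    · -- d > 0 : use a = b / (b + d)
      have hdpos : 0 < d := lt_of_le_of_ne hd0 (Ne.symm hd)
      have hbpos : 0 < b := lt_of_lt_of_le hdpos hdb
      have hspos : 0 < b + d := by linarith
      set a : ℝ := b / (b + d) with hadef
      clear_value a
      have ha1 : 1 / 2 ≤ a := by
        rw [hadef, le_div_iff₀ hspos]; linarith
      have ha2 : a ≤ 1 := by
        rw [hadef, div_le_one hspos]; linarith
      have h1a : 1 - a = d / (b + d) := by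
        rw [hadef]; field_simp; ring
      have haa : a * (1 - a) = (b * d) / (b + d) ^ 2 := by
        rw [h1a, hadef]; field_simp
      have hr : Real.sqrt (a * (1 - a)) = Real.sqrt (b * d) / (b + d) := by
        rw [haa, Real.sqrt_div (by positivity), Real.sqrt_sq hspos.le]
      have hcall := h a ⟨ha1, ha2⟩
      rw [hr, h1a, hadef] at hcall
      set s : ℝ := Real.sqrt (b * d) with hsdef
      have hs0 : 0 < s := Real.sqrt_pos.mpr (by positivity)
      have hssq : s ^ 2 = b * d := Real.sq_sqrt (by positivity)
      -- multiply hcall by (b + d)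
      have hE : (-(s / (b + d)) * L + d / (b + d) * b + s / (b + d) * c
          + b / (b + d) * d) * (b + d) = -s * L + d * b + s * c + b * d := by
        field_simp
      have h4 : s * (L - c) ≤ 2 * (b * d) := by
        have h5 := mul_le_mul_of_nonneg_right hcall hspos.le
        rw [zero_mul, hE] at h5
        nlinarith [h5]
      nlinarith [h4, hssq, hs0]
  · intro h a ha
    obtain ⟨ha1, ha2⟩ := ha
    have ha0 : (0:ℝ) ≤ a := by linarith
    have h1a0 : (0:ℝ) ≤ 1 - a := by linarith
    have e1 : Real.sqrt (a * (1 - a)) * Real.sqrt (b * d)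
        = Real.sqrt (a * d) * Real.sqrt ((1 - a) * b) := by
      rw [← Real.sqrt_mul (mul_nonneg ha0 h1a0), ← Real.sqrt_mul (mul_nonneg ha0 hd0)]
      ring_nf
    have hsq1 : Real.sqrt (a * d) ^ 2 = a * d := Real.sq_sqrt (mul_nonneg ha0 hd0)
    have hsq2 : Real.sqrt ((1 - a) * b) ^ 2 = (1 - a) * b :=
      Real.sq_sqrt (mul_nonneg h1a0 hb0)
    have h2 : 2 * (Real.sqrt (a * d) * Real.sqrt ((1 - a) * b)) ≤ a * d + (1 - a) * b := by
      nlinarith [sq_nonneg (Real.sqrt (a * d) - Real.sqrt ((1 - a) * b))]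
    have h1 : Real.sqrt (a * (1 - a)) * (L - c)
        ≤ Real.sqrt (a * (1 - a)) * (2 * Real.sqrt (b * d)) :=
      mul_le_mul_of_nonneg_left (by linarith) (Real.sqrt_nonneg _)
    nlinarith [h1, h2, e1]
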